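/- Let δ ∈ (0,1) and α₁, α₄, α₅, α₆ ∈ ℝ satisfy α₄ > 0 and α₄ − |α₁| − |α₅| − |α₆| − 1/(1−δ) > 0. Then there exists δ' > 0 such that for every pair of vectors n, m ∈ ℝ³ with |n| ≤ 1 and every symmetric traceless matrix D ∈ ℝ^{3×3} one has α₄|D|² + α₁(n·Dn)² + 2(m·Dn) + (α₅+α₆)|Dn|² + |m|² ≥ δ'(|Dn|² + |m|²). -/

import Mathlib

set_option maxHeartbeats 1000000


noncomputable section
open MeasureTheory Real

/-- Vectors in `ℝ³`. -/
abbrev V3 : Type := Fin 3 → ℝ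
/-- Real `3 × 3` matrices. -/
abbrev M3 : Type := Matrix (Fin 3) (Fin 3) ℝ

/-- The periodicity cell `Q = [-π, π]³`. -/
def Q3 : Set V3 := Set.Icc (fun _ => -Real.pi) (fun _ => Real.pi)

/-- Euclidean inner product on `ℝ³`. -/
def dot (a b : V3) : ℝ := ∑ i, a i * b i

/-- Frobenius inner product `A : B = ∑_{i,j} A_{ij} B_{ij}`. -/
def mdot (A B : M3) : ℝ := ∑ i, ∑ j, A i j * B i j

/-- Tensor product `(a ⊗ b)_{ij} = a_i b_j`. -/
def outer (a b : V3) : M3 := Matrix.of fun i j => a i * b j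

/-- Matrix-vector product. -/
def mv (A : M3) (x : V3) : V3 := A.mulVec x

/-- Partial derivative `∂_i f` of a scalar field. -/
def pd (i : Fin 3) (f : V3 → ℝ) (x : V3) : ℝ := fderiv ℝ f x (Pi.single i 1)

/-- Spatial gradient of a scalar field. -/
def grad (f : V3 → ℝ) (x : V3) : V3 := fun i => pd i f x

/-- Divergence of a vector field. -/
def divg (w : V3 → V3) (x : V3) : ℝ := ∑ i, pd i (fun y => w y i) x

/-- Divergence of a matrix field, `(div A)_i = ∑_j ∂_j A_{ij}`. -/
def divM (A : V3 → M3) (x : V3) : V3 := fun i => ∑ j, pd j (fun y => A y i j) x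

/-- Laplacian of a scalar field. -/
def lap (f : V3 → ℝ) (x : V3) : ℝ := ∑ i, pd i (fun y => pd i f y) x

/-- Componentwise Laplacian of a vector field. -/
def lapV (w : V3 → V3) (x : V3) : V3 := fun k => lap (fun y => w y k) x

/-- Gradient matrix `(∇w)_{ij} = ∂_j w_i`. -/
def gradM (w : V3 → V3) (x : V3) : M3 := Matrix.of fun i j => pd j (fun y => w y i) x

/-- Symmetric part `D(v) = ½(∇v + ∇vᵀ)` of the velocity gradient. -/
def Dv (w : V3 → V3) (x : V3) : M3 := (1/2 : ℝ) • (gradM w x + (gradM w x).transpose)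

/-- Antisymmetric part `Ω(v) = ½(∇v − ∇vᵀ)` of the velocity gradient. -/
def Ov (w : V3 → V3) (x : V3) : M3 := (1/2 : ℝ) • (gradM w x - (gradM w x).transpose)

/-- `(∇n ⊙ ∇n)_{ij} = ∑_k ∂_i n_k ∂_j n_k`. -/
def odotM (w : V3 → V3) (x : V3) : M3 :=
  Matrix.of fun i j => ∑ k, pd i (fun y => w y k) x * pd j (fun y => w y k) x

/-- `|∇w|² = ∑_{i,k} (∂_i w_k)²`. -/
def gnorm2 (w : V3 → V3) (x : V3) : ℝ := ∑ i, ∑ k, (pd i (fun y => w y k) x)^2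

/-- `2π`-periodicity in the space variables. -/
def Per {α : Type*} (f : V3 → α) : Prop :=
  ∀ (x : V3) (i : Fin 3), f (x + Pi.single i (2 * Real.pi)) = f x

/-- The dielectric matrix `Id + ε n ⊗ n`. -/
def matA (ε : ℝ) (n : V3) : M3 := 1 + ε • outer n n

/-- The singular configuration potential `F(r) = (1 − r) log(1 − r)`. -/
def Fpot (r : ℝ) : ℝ := (1 - r) * Real.log (1 - r)

/-- Its derivative `F'(r) = −log(1 − r) − 1`. -/
def Fpot' (r : ℝ) : ℝ := -Real.log (1 - r) - 1

/-- The corotational (Lie) derivative `n̊ = ∂_t n + v·∇n − Ω(v) n`. -/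
def ringD (v n : V3 → ℝ → V3) (x : V3) (t : ℝ) : V3 :=
  (fun k => deriv (fun s => n x s k) t)
    + (fun k => dot (v x t) (grad (fun y => n y t k) x))
    - mv (Ov (fun y => v y t) x) (n x t)

/-- Lemma 3.2 in the paper: positivity of the dissipation.
If `δ ∈ (0,1)`, `α₄ > 0` and `α₄ − |α₁| − |α₅| − |α₆| − 1/(1−δ) > 0`, there is `δ' > 0`
such that for all `n, m ∈ ℝ³` with `|n| ≤ 1` and every symmetric traceless `D`,
`α₄|D|² + α₁(n·Dn)² + 2(m·Dn) + (α₅+α₆)|Dn|² + |m|² ≥ δ'(|Dn|² + |m|²)`. -/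
theorem stmt0 (δ α₁ α₄ α₅ α₆ : ℝ) (hδ : δ ∈ Set.Ioo (0:ℝ) 1)
    (hα₄ : 0 < α₄)
    (hcoef : 0 < α₄ - |α₁| - |α₅| - |α₆| - 1 / (1 - δ)) :
    ∃ δ' > (0:ℝ), ∀ (n m : V3) (D : M3),
      dot n n ≤ 1 → D.IsSymm → Matrix.trace D = 0 →
      δ' * (dot (mv D n) (mv D n) + dot m m)
        ≤ α₄ * mdot D D + α₁ * (dot n (mv D n))^2 + 2 * dot m (mv D n)
          + (α₅ + α₆) * dot (mv D n) (mv D n) + dot m m := by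
  obtain ⟨hδ0, hδ1⟩ := hδ
  have h1δ : 0 < 1 - δ := by linarith
  set c := α₄ - |α₁| - |α₅| - |α₆| - 1 / (1 - δ) with hc
  refine ⟨min c δ, lt_min hcoef hδ0, ?_⟩
  intro n m D hn _ _
  set Dn := mv D n with hDndef
  have ha : 0 ≤ dot Dn Dn := Finset.sum_nonneg fun i _ => mul_self_nonneg _
  have hb : 0 ≤ dot m m := Finset.sum_nonneg fun i _ => mul_self_nonneg _
  have hd : 0 ≤ mdot D D :=
    Finset.sum_nonneg fun i _ => Finset.sum_nonneg fun j _ => mul_self_nonneg _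
  have hsq : ∀ v : V3, dot v v = ∑ i, (v i)^2 := by
    intro v; unfold dot; exact Finset.sum_congr rfl fun i _ => (sq (v i)).symm
  -- Cauchy-Schwarz: (n·Dn)² ≤ |n|²|Dn|²
  have hCS1 : (dot n Dn)^2 ≤ dot n n * dot Dn Dn := by
    rw [hsq, hsq]; exact Finset.sum_mul_sq_le_sq_mul_sq _ _ _
  have hCS2 : (dot m Dn)^2 ≤ dot m m * dot Dn Dn := by
    rw [hsq, hsq]; exact Finset.sum_mul_sq_le_sq_mul_sq _ _ _
  -- |Dn|² ≤ |D|² |n|²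
  have hrow : dot Dn Dn ≤ mdot D D * dot n n := by
    rw [hsq]
    have : ∀ i : Fin 3, (Dn i)^2 ≤ (∑ j, (D i j)^2) * dot n n := by
      intro i
      have : Dn i = ∑ j, D i j * n j := rfl
      rw [this, hsq]
      exact Finset.sum_mul_sq_le_sq_mul_sq _ _ _
    calc ∑ i, (Dn i)^2 ≤ ∑ i, (∑ j, (D i j)^2) * dot n n :=
          Finset.sum_le_sum fun i _ => this i
      _ = mdot D D * dot n n := by
          rw [← Finset.sum_mul]; congr 1
          exact Finset.sum_congr rfl fun i _ =>
            Finset.sum_congr rfl fun j _ => (sq (D i j))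
  have hn0 : 0 ≤ dot n n := Finset.sum_nonneg fun i _ => mul_self_nonneg _
  have had : dot Dn Dn ≤ mdot D D := by nlinarith
  have hs2 : (dot n Dn)^2 ≤ dot Dn Dn := by nlinarith
  -- Young
  have hyoung : -((1-δ) * dot m m + dot Dn Dn / (1-δ)) ≤ 2 * dot m Dn := by
    set x := (1-δ) * dot m m
    set y := dot Dn Dn / (1-δ)
    have hx : 0 ≤ x := by positivity
    have hy : 0 ≤ y := by positivity
    have hxy : (dot m Dn)^2 ≤ x * y := by
      have : x * y = dot m m * dot Dn Dn := by
        show (1-δ) * dot m m * (dot Dn Dn / (1-δ)) = _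
        rw [mul_div_assoc', div_eq_iff h1δ.ne']; ring
      rw [this]; exact hCS2
    nlinarith [sq_nonneg (x - y), sq_nonneg (x + y + 2 * dot m Dn)]
  have hα₁ : -|α₁| ≤ α₁ := neg_abs_le _
  have hα₅₆ : -(|α₅| + |α₆|) ≤ α₅ + α₆ := by
    have := abs_add_le α₅ α₆
    have := neg_abs_le (α₅ + α₆)
    linarith
  have key : c * dot Dn Dn + δ * dot m m
      ≤ α₄ * mdot D D + α₁ * (dot n Dn)^2 + 2 * dot m Dn
        + (α₅ + α₆) * dot Dn Dn + dot m m := by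
    have h1 : α₁ * (dot n Dn)^2 ≥ -|α₁| * dot Dn Dn := by
      nlinarith [sq_nonneg (dot n Dn), abs_nonneg α₁]
    have h2 : (α₅ + α₆) * dot Dn Dn ≥ -(|α₅| + |α₆|) * dot Dn Dn := by
      nlinarith
    have h3 : α₄ * mdot D D ≥ α₄ * dot Dn Dn := by nlinarith
    have h4 : dot Dn Dn / (1-δ) = (1/(1-δ)) * dot Dn Dn := by ring
    rw [h4] at hyoung
    rw [hc]
    linarith [h1, h2, h3, hyoung]
  have h5 : min c δ * dot Dn Dn ≤ c * dot Dn Dn :=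
    mul_le_mul_of_nonneg_right (min_le_left c δ) ha
  have h6 : min c δ * dot m m ≤ δ * dot m m :=
    mul_le_mul_of_nonneg_right (min_le_right c δ) hb
  linarith [key]
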